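/- Let J = ⟨p₁,…,p_n⟩ ⊆ ℝ[x₁,…,x_n] be generated by a sequence of parameters of degree d and let I ⊇ J be a homogeneous ideal. Suppose that for all homogeneous ideals containing a sequence of parameters of degree 3 in ℝ[x,y,z,w] the implication HF₃ = 14 ⇒ HF₄ ≤ 14 holds, and grant the duality HF_t(J) = HF_t(I) + HF_{n(d−1)−t}(J : I) for 0 ≤ t ≤ n(d−1). Then for n = 4, d = 3: every homogeneous ideal I in ℝ[x,y,z,w] containing a sequence of parameters of degree 3 with HF₄(I) ≤ 4 satisfies HF₅(I) ≤ 1. -/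

import Mathlib

set_option maxHeartbeats 2000000
set_option synthInstance.maxHeartbeats 1000000

open MvPolynomial

/-- The Hilbert function `HF_t(I) = dim_ℝ (ℝ[x,y,z,w]_t / I_t)`. -/
noncomputable def HF (I : Ideal (MvPolynomial (Fin 4) ℝ)) (t : ℕ) : ℕ :=
  Module.finrank ℝ (↥(homogeneousSubmodule (Fin 4) ℝ t) ⧸
    (Submodule.comap (homogeneousSubmodule (Fin 4) ℝ t).subtype (Submodule.restrictScalars ℝ I)))

/-- `p₁,…,p₄` is a sequence of parameters of degree 3 in `ℝ[x,y,z,w]`. -/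
def SeqParam3 (p : Fin 4 → MvPolynomial (Fin 4) ℝ) : Prop :=
  (∀ i, p i ∈ homogeneousSubmodule (Fin 4) ℝ 3) ∧
  (Ideal.span (Set.range p)).radical = Ideal.span (Set.range X)

/-- A homogeneous ideal: one generated by homogeneous polynomials. -/
def IsHomogIdeal (I : Ideal (MvPolynomial (Fin 4) ℝ)) : Prop :=
  ∃ S : Set (MvPolynomial (Fin 4) ℝ),
    (∀ f ∈ S, ∃ t : ℕ, f ∈ homogeneousSubmodule (Fin 4) ℝ t) ∧ I = Ideal.span S

noncomputable abbrev RR := MvPolynomial (Fin 4) ℝ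
noncomputable abbrev Rdeg (n : ℕ) : Submodule ℝ RR := homogeneousSubmodule (Fin 4) ℝ n
noncomputable abbrev Dn (I : Ideal RR) (N : ℕ) : Submodule ℝ (Rdeg N) :=
  Submodule.comap (Rdeg N).subtype (Submodule.restrictScalars ℝ I)


noncomputable def degEquiv (n : ℕ) : {d : Fin 4 →₀ ℕ // d.degree = n} ≃ Sym (Fin 4) n where
  toFun d := ⟨Finsupp.toMultiset d.1, by
    rw [Finsupp.card_toMultiset]; simpa [Finsupp.degree_apply, Finsupp.sum] using d.2⟩
  invFun m := ⟨Multiset.toFinsupp m.1, by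
    have : Multiset.card (Finsupp.toMultiset (Multiset.toFinsupp m.1)) = n := by
      rw [Multiset.toFinsupp_toMultiset]; exact m.2
    rw [Finsupp.card_toMultiset] at this
    simpa [Finsupp.degree_apply, Finsupp.sum] using this⟩
  left_inv d := by ext : 1; simp
  right_inv m := by ext : 1; simp

noncomputable instance (n : ℕ) : Fintype {d : Fin 4 →₀ ℕ // d.degree = n} :=
  Fintype.ofEquiv _ (degEquiv n).symm

theorem card_deg (n : ℕ) : Fintype.card {d : Fin 4 →₀ ℕ // d.degree = n} = (n+3).choose 3 := by
  rw [Fintype.card_congr (degEquiv n), Sym.card_sym_eq_multichoose, Nat.multichoose_eq]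
  have h : (Fintype.card (Fin 4) + n - 1) = n+3 := by simp; omega
  rw [h]
  have := Nat.choose_symm (n := n+3) (k := n) (by omega)
  have h2 : n + 3 - n = 3 := by omega
  rw [h2] at this
  omega

noncomputable def RdegEquiv (n : ℕ) :
    Rdeg n ≃ₗ[ℝ] ({d : Fin 4 →₀ ℕ // d.degree = n} →₀ ℝ) :=
  (LinearEquiv.ofEq _ _ (homogeneousSubmodule_eq_finsupp_supported (Fin 4) ℝ n)).trans
    (AddMonoidAlgebra.supportedEquivFinsupp _)

instance (n : ℕ) : FiniteDimensional ℝ (Rdeg n) :=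
  Module.Finite.equiv (RdegEquiv n).symm

theorem finrank_Rdeg (n : ℕ) : Module.finrank ℝ (Rdeg n) = (n+3).choose 3 := by
  rw [(RdegEquiv n).finrank_eq, Module.finrank_finsupp_self, card_deg]

theorem comp_mul {f : RR} {e : ℕ} (hf : f ∈ Rdeg e) (c : RR) (N : ℕ) :
    homogeneousComponent N (c * f) =
      if e ≤ N then homogeneousComponent (N - e) c * f else 0 := by
  conv_lhs => rw [← sum_homogeneousComponent c, Finset.sum_mul, map_sum]
  have hterm : ∀ m, homogeneousComponent N (homogeneousComponent m c * f)
      = if N = m + e then homogeneousComponent m c * f else 0 := fun m =>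
    homogeneousComponent_of_mem ((homogeneousComponent_isHomogeneous m c).mul hf)
  rw [Finset.sum_congr rfl fun m _ => hterm m]
  by_cases he : e ≤ N
  · rw [if_pos he]
    by_cases hd : N - e ≤ c.totalDegree
    · rw [Finset.sum_eq_single (N - e)]
      · rw [if_pos (by omega)]
      · intro m hm hne; rw [if_neg]; simp only [Finset.mem_range] at hm; omega
      · intro h; simp only [Finset.mem_range] at h; omega
    · rw [homogeneousComponent_eq_zero (N - e) c (by omega), zero_mul]
      apply Finset.sum_eq_zero; intro m hm; rw [if_neg]
      simp only [Finset.mem_range] at hm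
      omega
  · rw [if_neg he]; apply Finset.sum_eq_zero; intro m hm; rw [if_neg (by omega)]

theorem HF_add (I : Ideal RR) (N : ℕ) :
    HF I N + Module.finrank ℝ (Dn I N) = (N+3).choose 3 := by
  rw [← finrank_Rdeg N, HF]
  exact Submodule.finrank_quotient_add_finrank _

theorem HF_le (I : Ideal RR) (N : ℕ) : HF I N ≤ (N+3).choose 3 := by
  have := HF_add I N; omega

theorem HF_antitone {I I' : Ideal RR} (h : I ≤ I') (N : ℕ) : HF I' N ≤ HF I N := by
  have h1 := HF_add I N; have h2 := HF_add I' N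
  have : Module.finrank ℝ (Dn I N) ≤ Module.finrank ℝ (Dn I' N) :=
    Submodule.finrank_mono (Submodule.comap_mono (fun x hx => h hx))
  omega

theorem HF_top (N : ℕ) : HF ⊤ N = 0 := by
  have hT : Dn ⊤ N = ⊤ := by simp [Dn]
  rw [HF]
  haveI : Subsingleton (↥(Rdeg N) ⧸ Dn ⊤ N) := Submodule.Quotient.subsingleton_iff.2 hT
  exact Module.finrank_zero_of_subsingleton

theorem HF_bot (N : ℕ) : HF ⊥ N = (N+3).choose 3 := by
  have hD : Dn ⊥ N = ⊥ := by simp [Dn]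
  have := HF_add ⊥ N
  rw [hD, finrank_bot] at this
  omega

theorem Rdeg_le_of_HF_zero {I : Ideal RR} {N : ℕ} (h : HF I N = 0) :
    ∀ x, x ∈ Rdeg N → x ∈ I := by
  have h1 := HF_add I N
  have : Module.finrank ℝ (Dn I N) = Module.finrank ℝ (Rdeg N) := by rw [finrank_Rdeg]; omega
  have hT : Dn I N = ⊤ := Submodule.eq_top_of_finrank_eq this
  intro x hx
  have : (⟨x, hx⟩ : Rdeg N) ∈ Dn I N := hT ▸ Submodule.mem_top
  exact this

theorem span_comp {e N : ℕ} {S : Set RR} (hS : S ⊆ (Rdeg e : Set RR)) {x : RR}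
    (hx : x ∈ Ideal.span S) :
    homogeneousComponent N x ∈ Ideal.span S ∧ (N < e → homogeneousComponent N x = 0)
      ∧ (N = e → homogeneousComponent N x ∈ Submodule.span ℝ S) := by
  obtain ⟨n, c, s, rfl⟩ := Submodule.mem_span_set'.mp hx
  have hterm : ∀ i, homogeneousComponent N (c i • (s i : RR))
      = if e ≤ N then homogeneousComponent (N - e) (c i) * (s i : RR) else 0 := by
    intro i
    rw [smul_eq_mul, comp_mul (hS (s i).2)]
  rw [map_sum]
  refine ⟨?_, ?_, ?_⟩
  · apply Ideal.sum_mem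
    intro i _
    rw [hterm i]
    split
    · exact Ideal.mul_mem_left _ _ (Ideal.subset_span (s i).2)
    · exact Ideal.zero_mem _
  · intro hN
    apply Finset.sum_eq_zero
    intro i _
    rw [hterm i, if_neg (by omega)]
  · rintro rfl
    apply Submodule.sum_mem
    intro i _
    rw [hterm i, if_pos le_rfl, Nat.sub_self, homogeneousComponent_zero, ← smul_eq_C_mul]
    exact Submodule.smul_mem _ _ (Submodule.subset_span (s i).2)

theorem mem_self_of_homog {N : ℕ} {x : RR} (hx : x ∈ Rdeg N) :
    homogeneousComponent N x = x := by
  rw [homogeneousComponent_of_mem hx, if_pos rfl]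

theorem Dn_span_low {e : ℕ} {S : Set RR} (hS : S ⊆ (Rdeg e : Set RR)) {N : ℕ} (hN : N < e) :
    Dn (Ideal.span S) N = ⊥ := by
  rw [Submodule.eq_bot_iff]
  rintro x hx
  have h1 : (x : RR) ∈ Ideal.span S := hx
  have := (span_comp hS h1).2.1 hN
  rw [mem_self_of_homog x.2] at this
  exact Subtype.ext this

theorem HF_span_low {e : ℕ} {S : Set RR} (hS : S ⊆ (Rdeg e : Set RR)) {N : ℕ} (hN : N < e) :
    HF (Ideal.span S) N = (N+3).choose 3 := by
  have := HF_add (Ideal.span S) N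
  rw [Dn_span_low hS hN, finrank_bot] at this
  omega

noncomputable def mulMap {f : RR} (hf : f ∈ Rdeg 3) {N : ℕ} (hN : 3 ≤ N) :
    (Rdeg (N-3)) →ₗ[ℝ] (Rdeg N) where
  toFun z := ⟨f * z, by
    have := ((mem_homogeneousSubmodule _ _).1 hf).mul
      ((mem_homogeneousSubmodule _ _).1 z.2)
    rw [mem_homogeneousSubmodule]
    convert this using 1
    omega⟩
  map_add' a b := by ext; simp [mul_add]
  map_smul' r a := by ext; simp [Algebra.mul_smul_comm]

theorem step {S : Set RR} (hS : S ⊆ (Rdeg 3 : Set RR)) {f : RR} (hf : f ∈ Rdeg 3)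
    {N : ℕ} (hN : 3 ≤ N) :
    HF (Ideal.span S) N ≤ HF (Ideal.span (S ∪ {f})) N + HF (Ideal.span S) (N - 3) := by
  by_cases hf0 : f = 0
  · have : Ideal.span (S ∪ {f}) = Ideal.span S := by
      rw [Ideal.span_union, hf0]
      have : Ideal.span ({0} : Set RR) = ⊥ := by simp
      rw [this, sup_bot_eq]
    rw [this]; omega
  set L := Ideal.span S with hL
  set L' := Ideal.span (S ∪ {f}) with hL'
  set μ := mulMap hf hN with hμ
  have hμinj : Function.Injective μ := by
    rw [← LinearMap.ker_eq_bot, Submodule.eq_bot_iff]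
    rintro z hz
    have : f * (z : RR) = 0 := congrArg Subtype.val hz
    rcases mul_eq_zero.1 this with h | h
    · exact absurd h hf0
    · exact Subtype.ext h
  have hc1 : Dn L' N ≤ Dn L N ⊔ LinearMap.range μ := by
    rintro x hx
    have hx' : (x : RR) ∈ L ⊔ Ideal.span {f} := by
      rw [hL', Ideal.span_union] at hx; exact hx
    obtain ⟨a, ha, b, hb, hab⟩ := Submodule.mem_sup.1 hx'
    obtain ⟨c, rfl⟩ := Ideal.mem_span_singleton'.1 hb
    have hxc : (x : RR) = homogeneousComponent N (a + c * f) := by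
      rw [hab, mem_self_of_homog x.2]
    rw [map_add, comp_mul hf, if_pos hN] at hxc
    refine Submodule.mem_sup.2 ⟨⟨homogeneousComponent N a, homogeneousComponent_mem N a⟩,
      (span_comp hS ha).1, μ ⟨homogeneousComponent (N-3) c, homogeneousComponent_mem _ c⟩,
      ⟨_, rfl⟩, ?_⟩
    apply Subtype.ext
    show homogeneousComponent N a + f * homogeneousComponent (N-3) c = (x : RR)
    rw [hxc]; ring
  have hc2 : Submodule.map μ (Dn L (N-3)) ≤ Dn L N ⊓ LinearMap.range μ := by
    rintro y ⟨z, hz, rfl⟩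
    refine ⟨?_, ⟨z, rfl⟩⟩
    show f * (z : RR) ∈ L
    exact Ideal.mul_mem_left _ _ hz
  -- finrank bookkeeping
  have e1 : Module.finrank ℝ (Submodule.map μ (Dn L (N-3))) = Module.finrank ℝ (Dn L (N-3)) :=
    (Submodule.equivMapOfInjective μ hμinj _).symm.finrank_eq
  have e2 : Module.finrank ℝ (Dn L (N-3)) ≤ Module.finrank ℝ (Dn L N ⊓ LinearMap.range μ : Submodule ℝ (Rdeg N)) := by
    rw [← e1]; exact Submodule.finrank_mono hc2
  have e3 : Module.finrank ℝ (Dn L' N) ≤ Module.finrank ℝ (Dn L N ⊔ LinearMap.range μ : Submodule ℝ (Rdeg N)) :=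
    Submodule.finrank_mono hc1
  have e4 := Submodule.finrank_sup_add_finrank_inf_eq (Dn L N) (LinearMap.range μ)
  have e5 : Module.finrank ℝ (LinearMap.range μ) ≤ Module.finrank ℝ (Rdeg (N-3)) :=
    LinearMap.finrank_range_le μ
  have e6 := finrank_Rdeg (N-3)
  have a1 := HF_add L N
  have a2 := HF_add L' N
  have a3 := HF_add L (N-3)
  omega

def Tf (u : ℕ → ℕ) : ℕ → ℕ
  | N => u N + if _h : 3 ≤ N then Tf u (N - 3) else 0
  decreasing_by omega

theorem Tf_eq (u : ℕ → ℕ) (N : ℕ) : Tf u N = u N + if 3 ≤ N then Tf u (N - 3) else 0 := by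
  rw [Tf]; split <;> simp_all

theorem Tf_low (u : ℕ → ℕ) {N : ℕ} (h : N < 3) : Tf u N = u N := by
  rw [Tf_eq, if_neg (by omega), Nat.add_zero]

theorem choose_two (n : ℕ) : 2 * (n+2).choose 2 = (n+1)*(n+2) := by
  induction n with
  | zero => decide
  | succ n ih =>
    have h : (n+1+2) = (n+2)+1 := by omega
    rw [h, Nat.choose_succ_succ, Nat.choose_one_right]
    nlinarith

theorem choose_three (n : ℕ) : 6 * (n+3).choose 3 = (n+1)*(n+2)*(n+3) := by
  induction n with
  | zero => decide
  | succ n ih =>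
    have h : (n+1+3) = (n+3)+1 := by omega
    rw [h, Nat.choose_succ_succ]
    have h2 := choose_two (n+1)
    have h3 : (n+1+2) = n+3 := by omega
    rw [h3] at h2
    nlinarith

theorem Tf_high (u : ℕ → ℕ) {N : ℕ} (h : 3 ≤ N) : Tf u N = u N + Tf u (N - 3) := by
  rw [Tf_eq, if_pos h]

theorem Tf_mono {u v : ℕ → ℕ} (h : ∀ n, u n ≤ v n) : ∀ N, Tf u N ≤ Tf v N := by
  intro N
  induction N using Nat.strong_induction_on with
  | _ N ih =>
    by_cases h3 : 3 ≤ N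
    · rw [Tf_high u h3, Tf_high v h3]
      exact Nat.add_le_add (h N) (ih (N-3) (by omega))
    · rw [Tf_low u (by omega), Tf_low v (by omega)]; exact h N

theorem Tf_ge {u v : ℕ → ℕ} (hstep : ∀ N, 3 ≤ N → v N ≤ u N + v (N - 3))
    (hlow : ∀ N, N < 3 → v N ≤ u N) : ∀ N, v N ≤ Tf u N := by
  intro N
  induction N using Nat.strong_induction_on with
  | _ N ih =>
    by_cases h3 : 3 ≤ N
    · rw [Tf_high u h3]
      exact le_trans (hstep N h3) (Nat.add_le_add_left (ih (N-3) (by omega)) _)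
    · rw [Tf_low u (by omega)]; exact hlow N (by omega)

theorem chain_contradiction {u0 u1 u2 u3 : ℕ → ℕ}
    (h01 : ∀ N, u0 N ≤ Tf u1 N) (h12 : ∀ N, u1 N ≤ Tf u2 N) (h23 : ∀ N, u2 N ≤ Tf u3 N)
    (hvan : ∀ M, 9 ≤ M → u3 M = 0)
    (hb0 : u3 0 ≤ 1) (hb3 : u3 3 ≤ 20) (hb6 : u3 6 ≤ 84)
    (hu0 : ∀ N, u0 N = (N+3).choose 3) : False := by
  have t0 : Tf u3 0 = u3 0 := Tf_low u3 (by omega)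
  have t3 : Tf u3 3 = u3 3 + u3 0 := by
    rw [Tf_high u3 (by omega)]
    norm_num [t0]
  have t6 : Tf u3 6 = u3 6 + (u3 3 + u3 0) := by
    rw [Tf_high u3 (by omega)]
    norm_num [t3]
  have TA : ∀ m, Tf u3 (3*m) ≤ 105 := by
    intro m
    induction m using Nat.strong_induction_on with
    | _ m ih =>
      match m, ih with
      | 0, _ => rw [Nat.mul_zero, t0]; omega
      | 1, _ => rw [show 3*1 = 3 by norm_num, t3]; omega
      | 2, _ => rw [show 3*2 = 6 by norm_num, t6]; omega
      | (m+3), ih =>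
        rw [Tf_high u3 (by omega), hvan _ (by omega), show 3*(m+3) - 3 = 3*(m+2) by ring_nf; omega]
        have := ih (m+2) (by omega)
        omega
  have TB : ∀ m, Tf (Tf u3) (3*m) ≤ 105*(m+1) := by
    intro m
    induction m with
    | zero =>
      rw [Nat.mul_zero, Tf_low _ (by omega)]
      have := TA 0; rw [Nat.mul_zero] at this; omega
    | succ m ih =>
      rw [Tf_high _ (by omega : 3 ≤ 3*(m+1)), show 3*(m+1) - 3 = 3*m by ring_nf; omega]
      have := TA (m+1)
      omega
  have TC : ∀ m, Tf (Tf (Tf u3)) (3*m) ≤ 105*(m+1)*(m+2) := by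
    intro m
    induction m with
    | zero =>
      rw [Nat.mul_zero, Tf_low _ (by omega)]
      have := TB 0; rw [Nat.mul_zero] at this; omega
    | succ m ih =>
      rw [Tf_high _ (by omega : 3 ≤ 3*(m+1)), show 3*(m+1) - 3 = 3*m by ring_nf; omega]
      have := TB (m+1)
      nlinarith
  have big : u0 300 ≤ Tf (Tf (Tf u3)) 300 := by
    calc u0 300 ≤ Tf u1 300 := h01 300
    _ ≤ Tf (Tf u2) 300 := Tf_mono h12 300
    _ ≤ Tf (Tf (Tf u3)) 300 := Tf_mono (fun n => Tf_mono h23 n) 300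
  rw [hu0, show (300:ℕ) = 3*100 by norm_num] at big
  have := TC 100
  have hch := choose_three 300
  rw [show (300+3 : ℕ) = 3*100+3 by norm_num] at hch
  norm_num at hch big this
  omega

theorem rspan_le_ideal (S : Set RR) :
    Submodule.span ℝ S ≤ Submodule.restrictScalars ℝ (Ideal.span S) :=
  Submodule.span_le.2 fun s hs => Ideal.subset_span hs

theorem indep {p : Fin 4 → RR} (hp3 : ∀ i, p i ∈ Rdeg 3)
    (hvan : ∀ M, 9 ≤ M → HF (Ideal.span (Set.range p)) M = 0) :
    LinearIndependent ℝ p := by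
  rw [linearIndependent_iff_notMem_span]
  by_contra hdep
  push_neg at hdep
  obtain ⟨i, hi⟩ := hdep
  set q : Fin 3 → RR := p ∘ i.succAbove with hq
  have hq3 : ∀ j, q j ∈ Rdeg 3 := fun j => hp3 _
  have hrange : Set.range q = p '' (Set.univ \ {i}) := by
    rw [hq, Set.range_comp, Fin.range_succAbove, Set.compl_eq_univ_diff]
  have hJq : Ideal.span (Set.range p) = Ideal.span (Set.range q) := by
    apply le_antisymm
    · rw [Ideal.span_le]
      rintro x ⟨j, rfl⟩
      by_cases hj : j = i
      · subst hj
        have : p j ∈ Submodule.span ℝ (Set.range q) := by rw [hrange]; exact hi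
        exact rspan_le_ideal _ this
      · apply Ideal.subset_span
        rw [hrange]
        exact ⟨j, ⟨trivial, hj⟩, rfl⟩
    · rw [Ideal.span_le]
      rintro x ⟨j, rfl⟩
      exact Ideal.subset_span ⟨_, rfl⟩
  -- the chain of ideals
  set Sk : ℕ → Set RR := fun k => q '' {j | (j : ℕ) < k} with hSk
  have hSk3 : ∀ k, Sk k ⊆ (Rdeg 3 : Set RR) := by
    rintro k x ⟨j, _, rfl⟩; exact hq3 j
  have hS0 : Sk 0 = ∅ := by
    rw [hSk]; simp
  have hS3 : Sk 3 = Set.range q := by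
    rw [hSk]
    ext x; constructor
    · rintro ⟨j, _, rfl⟩; exact ⟨j, rfl⟩
    · rintro ⟨j, rfl⟩; exact ⟨j, j.isLt, rfl⟩
  have hSstep : ∀ k : Fin 3, Sk (k+1) = Sk k ∪ {q k} := by
    intro k
    rw [hSk]
    ext x; constructor
    · rintro ⟨j, hj, rfl⟩
      simp only [Set.mem_setOf_eq] at hj
      by_cases hjk : (j : ℕ) < k
      · exact Or.inl ⟨j, hjk, rfl⟩
      · have : j = k := by apply Fin.ext; omega
        subst this; exact Or.inr rfl
    · rintro (⟨j, hj, rfl⟩ | rfl)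
      · exact ⟨j, by simp only [Set.mem_setOf_eq] at hj ⊢; omega, rfl⟩
      · exact ⟨k, by simp, rfl⟩
  set u : ℕ → ℕ → ℕ := fun k N => HF (Ideal.span (Sk k)) N with hu
  have key : ∀ k : Fin 3, ∀ N, u k N ≤ Tf (u (k+1)) N := by
    intro k
    apply Tf_ge
    · intro N hN
      have := step (hSk3 k) (hq3 k) hN
      rw [← hSstep k] at this
      exact this
    · intro N hN
      rw [hu]
      simp only
      rw [HF_span_low (hSk3 k) hN, HF_span_low (hSk3 (k+1)) hN]
  have hu0 : ∀ N, u 0 N = (N+3).choose 3 := by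
    intro N
    rw [hu]; simp only
    rw [hS0, Ideal.span_empty, HF_bot]
  have hu3van : ∀ M, 9 ≤ M → u 3 M = 0 := by
    intro M hM
    rw [hu]; simp only
    rw [hS3, ← hJq]
    exact hvan M hM
  exact chain_contradiction (key 0) (key 1) (key 2) hu3van
    (by have := HF_le (Ideal.span (Sk 3)) 0; have h : (0+3).choose 3 = 1 := by decide
        rw [h] at this; exact this)
    (by have := HF_le (Ideal.span (Sk 3)) 3; have h : (3+3).choose 3 = 20 := by decide
        rw [h] at this; exact this)
    (by have := HF_le (Ideal.span (Sk 3)) 6; have h : (6+3).choose 3 = 84 := by decide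
        rw [h] at this; exact this)
    hu0

theorem deg_eq (d : Fin 4 →₀ ℕ) : d.degree = ∑ i : Fin 4, d i := by
  rw [Finsupp.degree]
  exact Finset.sum_subset (Finset.subset_univ _)
    (fun i _ hi => Finsupp.notMem_support_iff.1 hi)

theorem degree_add' (a b : Fin 4 →₀ ℕ) : (a + b).degree = a.degree + b.degree := by
  rw [deg_eq, deg_eq, deg_eq, ← Finset.sum_add_distrib]
  simp [Finsupp.add_apply]

theorem degree_single' (i : Fin 4) (k : ℕ) : (Finsupp.single i k).degree = k := by
  by_cases hk : k = 0
  · subst hk; simp [Finsupp.degree]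
  · rw [Finsupp.degree_apply, Finsupp.support_single_ne_zero _ hk, Finset.sum_singleton,
      Finsupp.single_eq_same]

theorem exists_le_degree (d : Fin 4 →₀ ℕ) (k : ℕ) (hk : k ≤ d.degree) :
    ∃ e : Fin 4 →₀ ℕ, (∀ i, e i ≤ d i) ∧ e.degree = k := by
  induction k with
  | zero => exact ⟨0, fun i => Nat.zero_le _, map_zero _⟩
  | succ k ih =>
    obtain ⟨e, hle, hdeg⟩ := ih (by omega)
    have hne : ∃ i, e i < d i := by
      by_contra h
      push_neg at h
      have : e = d := Finsupp.ext fun i => le_antisymm (hle i) (h i)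
      subst this
      omega
    obtain ⟨i, hi⟩ := hne
    refine ⟨e + Finsupp.single i 1, ?_, ?_⟩
    · intro j
      rw [Finsupp.add_apply]
      by_cases hij : j = i
      · subst hij; rw [Finsupp.single_eq_same]; omega
      · rw [Finsupp.single_eq_of_ne' (Ne.symm hij)]; exact hle j
    · rw [degree_add', degree_single', hdeg]

theorem monomial_split (v : Fin 4 →₀ ℕ) (e : Fin 4 →₀ ℕ) (hle : ∀ i, e i ≤ v i) (c : ℝ) :
    (monomial v c : RR) = monomial e 1 * monomial (v - e) c := by
  have hev : e + (v - e) = v := by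
    ext j
    rw [Finsupp.add_apply, Finsupp.tsub_apply]
    have := hle j
    omega
  rw [monomial_mul, one_mul, hev]

theorem degree_sub (v e : Fin 4 →₀ ℕ) (hle : ∀ i, e i ≤ v i) :
    (v - e).degree = v.degree - e.degree := by
  rw [deg_eq, deg_eq, deg_eq, Fin.sum_univ_four, Fin.sum_univ_four, Fin.sum_univ_four]
  simp only [Finsupp.tsub_apply]
  have h0 := hle 0; have h1 := hle 1; have h2 := hle 2; have h3 := hle 3
  omega

theorem Rdeg_succ_le {I : Ideal RR} {M : ℕ} (h : ∀ x ∈ Rdeg M, x ∈ I) :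
    ∀ x ∈ Rdeg (M+1), x ∈ I := by
  intro x hx
  rw [as_sum x]
  apply Ideal.sum_mem
  intro v hv
  have hdeg : v.degree = M + 1 := by
    have := (mem_homogeneousSubmodule _ _).1 hx
    have hc : coeff v x ≠ 0 := mem_support_iff.1 hv
    have := this hc
    rw [Finsupp.degree_eq_weight_one]; exact this
  have hvne : ∃ i, 0 < v i := by
    by_contra hcon
    push_neg at hcon
    have : v = 0 := Finsupp.ext fun i => by have := hcon i; simp; omega
    rw [this, map_zero] at hdeg
    omega
  obtain ⟨i, hi⟩ := hvne
  have hle : ∀ j, (Finsupp.single i 1) j ≤ v j := by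
    intro j
    by_cases hij : j = i
    · subst hij; rw [Finsupp.single_eq_same]; omega
    · rw [Finsupp.single_eq_of_ne' (Ne.symm hij)]; omega
  rw [monomial_split v (Finsupp.single i 1) hle (coeff v x)]
  apply Ideal.mul_mem_left
  apply h
  rw [mem_homogeneousSubmodule]
  apply isHomogeneous_monomial
  rw [degree_sub v _ hle, hdeg, degree_single']
  omega

theorem nine_le {J : Ideal RR}
    (h5 : ∀ x ∈ Rdeg 5, ∀ y, y ∈ (Ideal.span ((Rdeg 4 : Submodule ℝ RR) : Set RR)) → x * y ∈ J) :
    ∀ x ∈ Rdeg 9, x ∈ J := by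
  intro x hx
  rw [as_sum x]
  apply Ideal.sum_mem
  intro v hv
  have hdeg : v.degree = 9 := by
    have := (mem_homogeneousSubmodule _ _).1 hx
    have hc : coeff v x ≠ 0 := mem_support_iff.1 hv
    have := this hc
    rw [Finsupp.degree_eq_weight_one]; exact this
  obtain ⟨e, hle, hdeg5⟩ := exists_le_degree v 5 (by omega)
  rw [monomial_split v e hle (coeff v x)]
  apply h5
  · rw [mem_homogeneousSubmodule]
    exact isHomogeneous_monomial _ hdeg5
  · apply Ideal.subset_span
    show (monomial (v - e) (coeff v x) : RR) ∈ (Rdeg 4 : Submodule ℝ RR)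
    rw [mem_homogeneousSubmodule]
    apply isHomogeneous_monomial
    rw [degree_sub v e hle, hdeg, hdeg5]

theorem all_high_le {J : Ideal RR} (h9 : ∀ x ∈ Rdeg 9, x ∈ J) :
    ∀ M, 9 ≤ M → ∀ x ∈ Rdeg M, x ∈ J := by
  intro M
  induction M with
  | zero => omega
  | succ M ih =>
    intro hM
    by_cases h : 9 ≤ M
    · exact Rdeg_succ_le (ih h)
    · have : M + 1 = 9 := by omega
      rw [this]; exact h9

theorem HF_eq_zero_of_le {I : Ideal RR} {N : ℕ} (h : ∀ x ∈ Rdeg N, x ∈ I) :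
    HF I N = 0 := by
  have hT : Dn I N = ⊤ := by
    rw [Submodule.eq_top_iff']
    intro x
    exact h x x.2
  rw [HF]
  haveI : Subsingleton (↥(Rdeg N) ⧸ Dn I N) := Submodule.Quotient.subsingleton_iff.2 hT
  exact Module.finrank_zero_of_subsingleton

theorem HF_congr {I I' : Ideal RR} {N : ℕ} (h : Dn I N = Dn I' N) : HF I N = HF I' N := by
  have h1 := HF_add I N
  have h2 := HF_add I' N
  rw [h] at h1
  omega

theorem exists_intermediate {V : Type _} [AddCommGroup V] [Module ℝ V] [FiniteDimensional ℝ V]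
    (W₀ W : Submodule ℝ V) (h0 : W₀ ≤ W) (m : ℕ) (hm0 : Module.finrank ℝ W₀ ≤ m)
    (hmW : m ≤ Module.finrank ℝ W) :
    ∃ V', W₀ ≤ V' ∧ V' ≤ W ∧ Module.finrank ℝ V' = m := by
  obtain ⟨d, hd⟩ : ∃ d, m - Module.finrank ℝ W₀ = d := ⟨_, rfl⟩
  induction d generalizing W₀ with
  | zero => exact ⟨W₀, le_rfl, h0, by omega⟩
  | succ d ih =>
    have hlt : Module.finrank ℝ W₀ < Module.finrank ℝ W := by omega
    have hne : ¬ (W ≤ W₀) := by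
      intro hle
      have := Submodule.finrank_mono hle
      omega
    obtain ⟨x, hxW, hxW₀⟩ := SetLike.not_le_iff_exists.1 hne
    have hxmem : x ∈ W₀ ⊔ Submodule.span ℝ {x} :=
      Submodule.mem_sup_right (Submodule.mem_span_singleton_self x)
    have h1W : W₀ ⊔ Submodule.span ℝ {x} ≤ W :=
      sup_le h0 ((Submodule.span_singleton_le_iff_mem _ _).2 hxW)
    have hfr : Module.finrank ℝ ↥(W₀ ⊔ Submodule.span ℝ {x}) = Module.finrank ℝ W₀ + 1 := by
      have he := Submodule.finrank_sup_add_finrank_inf_eq W₀ (Submodule.span ℝ {x})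
      have hs1 : Module.finrank ℝ (Submodule.span ℝ ({x} : Set V)) ≤ 1 :=
        (finrank_span_le_card ({x} : Set V)).trans (by simp)
      have hgt : Module.finrank ℝ W₀ < Module.finrank ℝ ↥(W₀ ⊔ Submodule.span ℝ {x}) :=
        Submodule.finrank_lt_finrank_of_lt
          (lt_of_le_of_ne le_sup_left (fun heq => hxW₀ (heq ▸ hxmem)))
      omega
    obtain ⟨V', h1, h2, h3⟩ := ih (W₀ ⊔ Submodule.span ℝ {x}) h1W (by omega) (by omega)
    exact ⟨V', le_trans le_sup_left h1, h2, h3⟩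

/-- Take `n = 4`, `d = 3` (so `n(d−1) = 8`). Suppose that for all homogeneous ideals `I`
in `ℝ[x,y,z,w]` containing a sequence of parameters of degree 3 the implication
`HF₃(I) = 14 ⇒ HF₄(I) ≤ 14` holds, and grant the duality
`HF_t(J) = HF_t(I) + HF_{8−t}(J : I)` for `0 ≤ t ≤ 8`, where `J ⊆ I` is generated by a
sequence of parameters of degree 3. Then every homogeneous ideal `I` in `ℝ[x,y,z,w]`
containing a sequence of parameters of degree 3 with `HF₄(I) ≤ 4` satisfies
`HF₅(I) ≤ 1`. -/
theorem stmt_19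
    (hEGH : ∀ I : Ideal (MvPolynomial (Fin 4) ℝ), IsHomogIdeal I →
      (∃ p : Fin 4 → MvPolynomial (Fin 4) ℝ, SeqParam3 p ∧ ∀ i, p i ∈ I) →
      HF I 3 = 14 → HF I 4 ≤ 14)
    (hdual : ∀ p : Fin 4 → MvPolynomial (Fin 4) ℝ, SeqParam3 p →
      ∀ I : Ideal (MvPolynomial (Fin 4) ℝ), IsHomogIdeal I →
      Ideal.span (Set.range p) ≤ I →
      ∀ t : ℕ, t ≤ 8 →
        HF (Ideal.span (Set.range p)) t
          = HF I t + HF ((Ideal.span (Set.range p)).colon I) (8 - t)) :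
    ∀ I : Ideal (MvPolynomial (Fin 4) ℝ), IsHomogIdeal I →
      (∃ p : Fin 4 → MvPolynomial (Fin 4) ℝ, SeqParam3 p ∧ ∀ i, p i ∈ I) →
      HF I 4 ≤ 4 → HF I 5 ≤ 1 := by
  intro I hI hpI ha4
  by_contra ha5'
  push_neg at ha5'
  obtain ⟨p, hp, hpmem⟩ := hpI
  obtain ⟨hp3, hprad⟩ := hp
  set J := Ideal.span (Set.range p) with hJdef
  have hSp : Set.range p ⊆ (Rdeg 3 : Set RR) := by rintro x ⟨i, rfl⟩; exact hp3 i
  have hJI : J ≤ I := Ideal.span_le.2 (by rintro x ⟨i, rfl⟩; exact hpmem i)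
  -- symmetry
  have htophom : IsHomogIdeal ⊤ := by
    refine ⟨{1}, fun f hf => ⟨0, ?_⟩, (Ideal.span_singleton_one).symm⟩
    rw [Set.mem_singleton_iff] at hf
    subst hf
    exact isHomogeneous_one _ _
  have hcolon_top : J.colon ((⊤ : Ideal RR) : Set RR) = J := by
    ext r
    rw [Submodule.mem_colon]
    constructor
    · intro h
      simpa using h 1 trivial
    · intro hr y _
      exact Ideal.mul_mem_right y J hr
  have hsym : ∀ t, t ≤ 8 → HF J t = HF J (8 - t) := by
    intro t ht
    have := hdual p ⟨hp3, hprad⟩ ⊤ htophom le_top t ht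
    rwa [HF_top, hcolon_top, Nat.zero_add] at this
  -- vanishing in degrees ≥ 9
  have hvan : ∀ M, 9 ≤ M → HF J M = 0 := by
    have hR4 : ((Rdeg 4 : Submodule ℝ RR) : Set RR) ⊆ (Rdeg 4 : Set RR) := le_rfl
    set M4 : Ideal RR := Ideal.span ((Rdeg 4 : Submodule ℝ RR) : Set RR) with hM4
    have hI4hom : IsHomogIdeal (J ⊔ M4) := by
      refine ⟨Set.range p ∪ ((Rdeg 4 : Submodule ℝ RR) : Set RR), ?_, ?_⟩
      · rintro f (⟨i, rfl⟩ | hf)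
        · exact ⟨3, hp3 i⟩
        · exact ⟨4, hf⟩
      · rw [Ideal.span_union]
    have hd3 := hdual p ⟨hp3, hprad⟩ (J ⊔ M4) hI4hom le_sup_left 3 (by omega)
    rw [← hJdef] at hd3
    rw [show (8:ℕ) - 3 = 5 by omega] at hd3
    have hDn : Dn (J ⊔ M4) 3 = Dn J 3 := by
      apply le_antisymm
      · rintro x hx
        have hx' : (x : RR) ∈ J ⊔ M4 := hx
        obtain ⟨a, ha, b, hb, hab⟩ := Submodule.mem_sup.1 hx'
        have : (x : RR) = homogeneousComponent 3 a + homogeneousComponent 3 b := by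
          rw [← map_add, hab, mem_self_of_homog x.2]
        rw [(span_comp hR4 hb).2.1 (by omega), add_zero] at this
        show (x : RR) ∈ J
        rw [this]
        exact (span_comp hSp ha).1
      · exact Submodule.comap_mono (fun y hy => Submodule.mem_sup_left hy)
    have h50 : HF (J.colon ((J ⊔ M4 : Ideal RR) : Set RR)) 5 = 0 := by
      have := HF_congr hDn
      omega
    have h5 : ∀ x ∈ Rdeg 5, ∀ y, y ∈ M4 → x * y ∈ J := by
      intro x hx y hy
      have hxc : x ∈ J.colon ((J ⊔ M4 : Ideal RR) : Set RR) := Rdeg_le_of_HF_zero h50 x hx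
      rw [Submodule.mem_colon] at hxc
      exact hxc y (Submodule.mem_sup_right hy)
    intro M hM
    exact HF_eq_zero_of_le (all_high_le (nine_le h5) M hM)
  have hind : LinearIndependent ℝ p := indep hp3 hvan
  -- HF J 3 = 16
  set pl : Fin 4 → Rdeg 3 := fun i => ⟨p i, hp3 i⟩ with hpl
  have hplind : LinearIndependent ℝ pl := by
    apply LinearIndependent.of_comp (Rdeg 3).subtype
    exact hind
  have hplspan : Submodule.map (Rdeg 3).subtype (Submodule.span ℝ (Set.range pl))
      = Submodule.span ℝ (Set.range p) := by
    rw [Submodule.map_span]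
    congr 1
    rw [← Set.range_comp]
    rfl
  have hDnJ3 : Dn J 3 = Submodule.span ℝ (Set.range pl) := by
    apply le_antisymm
    · rintro x hx
      have hx' : (x : RR) ∈ J := hx
      have := (span_comp hSp hx').2.2 rfl
      rw [mem_self_of_homog x.2] at this
      rw [← hplspan] at this
      obtain ⟨y, hy, hyx⟩ := this
      have : y = x := Subtype.ext hyx
      rwa [← this]
    · rw [Submodule.span_le]
      rintro y ⟨i, rfl⟩
      show (p i : RR) ∈ J
      exact Ideal.subset_span ⟨i, rfl⟩
  have hfr4 : Module.finrank ℝ (Dn J 3) = 4 := by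
    rw [hDnJ3, finrank_span_eq_card hplind]
    simp
  have h3 : HF J 3 = 16 := by
    have := HF_add J 3
    rw [hfr4] at this
    have hc : (3+3).choose 3 = 20 := by decide
    omega
  -- HF J 4 ≥ 19
  have h4 : 19 ≤ HF J 4 := by
    have hmulmem : ∀ (f : Rdeg 1) (i : Fin 4), (f : RR) * p i ∈ Rdeg 4 := by
      intro f i
      have := ((mem_homogeneousSubmodule _ _).1 f.2).mul ((mem_homogeneousSubmodule _ _).1 (hp3 i))
      rw [mem_homogeneousSubmodule]
      convert this using 1
    set ψ : (Fin 4 → Rdeg 1) →ₗ[ℝ] Rdeg 4 :=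
      { toFun := fun f => ⟨∑ i, (f i : RR) * p i, Submodule.sum_mem _ fun i _ => hmulmem (f i) i⟩
        map_add' := by
          intro a b
          apply Subtype.ext
          show ∑ i, ((a i : RR) + b i) * p i = (∑ i, (a i : RR) * p i) + ∑ i, (b i : RR) * p i
          rw [← Finset.sum_add_distrib]
          congr 1
          ext i
          ring
        map_smul' := by
          intro r a
          apply Subtype.ext
          show ∑ i, (r • (a i : RR)) * p i = r • ∑ i, (a i : RR) * p i
          rw [Finset.smul_sum]
          congr 1
          ext i
          rw [smul_mul_assoc] } with hψ
    have hDn4 : Dn J 4 ≤ LinearMap.range ψ := by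
      rintro x hx
      have hx' : (x : RR) ∈ J := hx
      obtain ⟨c, hc⟩ := Ideal.mem_span_range_iff_exists_fun.1 hx'
      refine ⟨fun i => ⟨homogeneousComponent 1 (c i), homogeneousComponent_mem 1 (c i)⟩, ?_⟩
      apply Subtype.ext
      show ∑ i, homogeneousComponent 1 (c i) * p i = (x : RR)
      have : (x : RR) = homogeneousComponent 4 (∑ i, c i * p i) := by
        rw [hc, mem_self_of_homog x.2]
      rw [map_sum] at this
      rw [this]
      congr 1
      ext i
      rw [comp_mul (hp3 i) (c i) 4, if_pos (by omega)]
    have hfr16 : Module.finrank ℝ (Dn J 4) ≤ 16 := by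
      have h1 : Module.finrank ℝ (Dn J 4) ≤ Module.finrank ℝ (LinearMap.range ψ) :=
        Submodule.finrank_mono hDn4
      have h2 : Module.finrank ℝ (LinearMap.range ψ) ≤ Module.finrank ℝ (Fin 4 → Rdeg 1) :=
        LinearMap.finrank_range_le ψ
      have h3 : Module.finrank ℝ (Fin 4 → Rdeg 1) = 16 := by
        rw [Module.finrank_pi_fintype]
        have : Module.finrank ℝ (Rdeg 1) = 4 := by rw [finrank_Rdeg]; decide
        simp [this]
      omega
    have := HF_add J 4
    have hc : (4+3).choose 3 = 35 := by decide
    omega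
  -- duality at t = 4, 5
  set K := J.colon I with hK
  have hd4 := hdual p ⟨hp3, hprad⟩ I hI hJI 4 (by omega)
  have hd5 := hdual p ⟨hp3, hprad⟩ I hI hJI 5 (by omega)
  rw [← hJdef, show (8:ℕ) - 4 = 4 by omega, ← hK] at hd4
  rw [← hJdef, show (8:ℕ) - 5 = 3 by omega, ← hK] at hd5
  have h5eq : HF J 5 = 16 := by
    have := hsym 5 (by omega)
    rw [show (8:ℕ) - 5 = 3 by omega] at this
    omega
  -- HF K 3 ≤ 14, so Dn K 3 has finrank ≥ 6
  have hK3 : Module.finrank ℝ (Dn K 3) = 4 + HF I 5 := by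
    have := HF_add K 3
    have hc : (3+3).choose 3 = 20 := by decide
    omega
  have hJK : J ≤ K := by
    intro x hx
    rw [hK, Submodule.mem_colon]
    intro y _
    exact Ideal.mul_mem_right y J hx
  have hW0le : Submodule.span ℝ (Set.range pl) ≤ Dn K 3 := by
    rw [Submodule.span_le]
    rintro y ⟨i, rfl⟩
    show (p i : RR) ∈ K
    exact hJK (Ideal.subset_span ⟨i, rfl⟩)
  obtain ⟨V', hV1, hV2, hV3⟩ := exists_intermediate (Submodule.span ℝ (Set.range pl)) (Dn K 3)
    hW0le 6 (by rw [finrank_span_eq_card hplind]; simp) (by omega)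
  set V : Submodule ℝ RR := Submodule.map (Rdeg 3).subtype V' with hV
  have hVle3 : (V : Set RR) ⊆ (Rdeg 3 : Set RR) := by
    rintro f ⟨y, hy, rfl⟩
    exact y.2
  set K' : Ideal RR := Ideal.span (V : Set RR) with hK'
  have hK'hom : IsHomogIdeal K' := ⟨(V : Set RR), fun f hf => ⟨3, hVle3 hf⟩, rfl⟩
  have hpK' : ∀ i, p i ∈ K' := by
    intro i
    apply Ideal.subset_span
    exact ⟨pl i, hV1 (Submodule.subset_span ⟨i, rfl⟩), rfl⟩
  have hK'K : K' ≤ K := by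
    rw [hK', Ideal.span_le]
    rintro f ⟨y, hy, rfl⟩
    exact hV2 hy
  have hDnK' : Dn K' 3 = V' := by
    apply le_antisymm
    · rintro x hx
      have hx' : (x : RR) ∈ K' := hx
      have := (span_comp hVle3 hx').2.2 rfl
      rw [mem_self_of_homog x.2, Submodule.span_eq] at this
      obtain ⟨y, hy, hyx⟩ := this
      have : y = x := Subtype.ext hyx
      rwa [← this]
    · intro y hy
      show (y : RR) ∈ K'
      exact Ideal.subset_span ⟨y, hy, rfl⟩
  have hHFK'3 : HF K' 3 = 14 := by
    have := HF_add K' 3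
    rw [hDnK', hV3] at this
    have hc : (3+3).choose 3 = 20 := by decide
    omega
  have hEGHK' := hEGH K' hK'hom ⟨p, ⟨hp3, hprad⟩, hpK'⟩ hHFK'3
  have hKK' : HF K 4 ≤ HF K' 4 := HF_antitone hK'K 4
  omega
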